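/- Let F, F' : F_2^m → F_2^m and suppose L = (L_1,L_2) is a linear permutation of F_2^{2m} with L(G_F) = G_{F'} and L_1(x,y) = L(x) depends only on the first variable. Then F' is EA-equivalent to F, i.e. F' = A_1 ∘ F ∘ A_2 + A for some affine permutations A_1, A_2 and affine A. -/

import Mathlib

/-- If a linear permutation `L` of `𝔽₂^{2m}` maps the graph of `F` to the graph
of `F'` and its first component `L₁(x,y)` depends only on `x`, then `F'` is
EA-equivalent to `F`: `F' = A₁ ∘ F ∘ A₂ + A` with `A₁, A₂` affine permutations
and `A` affine. -/
theorem stmt_6 (m : ℕ) (F F' : (Fin m → ZMod 2) → (Fin m → ZMod 2))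
    (L : ((Fin m → ZMod 2) × (Fin m → ZMod 2)) ≃ₗ[ZMod 2]
         ((Fin m → ZMod 2) × (Fin m → ZMod 2)))
    (hL : L '' {p | p.2 = F p.1} = {p | p.2 = F' p.1})
    (hdep : ∀ x y y' : Fin m → ZMod 2, (L (x, y)).1 = (L (x, y')).1) :
    ∃ (A₁ A₂ : (Fin m → ZMod 2) ≃ₗ[ZMod 2] (Fin m → ZMod 2))
      (A : (Fin m → ZMod 2) →ₗ[ZMod 2] (Fin m → ZMod 2))
      (c₁ c₂ c : Fin m → ZMod 2),
      ∀ x, F' x = A₁ (F (A₂ x + c₂)) + c₁ + A x + c := by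
  classical
  -- L₁ : x ↦ (L (x,0)).1
  let L1 : (Fin m → ZMod 2) →ₗ[ZMod 2] (Fin m → ZMod 2) :=
    { toFun := fun x => (L (x, 0)).1
      map_add' := by
        intro a b
        show (L (a + b, 0)).1 = (L (a, 0)).1 + (L (b, 0)).1
        have h : ((a : Fin m → ZMod 2), (0 : Fin m → ZMod 2)) + (b, 0) = (a + b, 0) := by
          simp
        rw [← h, map_add]; rfl
      map_smul' := by
        intro c a
        show (L (c • a, 0)).1 = c • (L (a, 0)).1
        have h : c • ((a : Fin m → ZMod 2), (0 : Fin m → ZMod 2)) = (c • a, 0) := by simp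
        rw [← h, map_smul]; rfl }
  -- A₁ : y ↦ (L (0,y)).2
  let A1 : (Fin m → ZMod 2) →ₗ[ZMod 2] (Fin m → ZMod 2) :=
    { toFun := fun y => (L (0, y)).2
      map_add' := by
        intro a b
        show (L (0, a + b)).2 = (L (0, a)).2 + (L (0, b)).2
        have h : ((0 : Fin m → ZMod 2), (a : Fin m → ZMod 2)) + (0, b) = (0, a + b) := by
          simp
        rw [← h, map_add]; rfl
      map_smul' := by
        intro c a
        show (L (0, c • a)).2 = c • (L (0, a)).2
        have h : c • ((0 : Fin m → ZMod 2), (a : Fin m → ZMod 2)) = (0, c • a) := by simp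
        rw [← h, map_smul]; rfl }
  have key : ∀ x : Fin m → ZMod 2,
      ∃ p : (Fin m → ZMod 2) × (Fin m → ZMod 2), p.2 = F p.1 ∧ L p = (x, F' x) := by
    intro x
    have hx : (x, F' x) ∈ {p : (Fin m → ZMod 2) × (Fin m → ZMod 2) | p.2 = F' p.1} := rfl
    rw [← hL] at hx
    obtain ⟨p, hp1, hp2⟩ := hx
    exact ⟨p, hp1, hp2⟩
  have hL1eq : ∀ p : (Fin m → ZMod 2) × (Fin m → ZMod 2), L1 p.1 = (L p).1 := by
    intro p
    have h := hdep p.1 0 p.2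
    exact h
  have hL1surj : Function.Surjective L1 := by
    intro x
    obtain ⟨p, _, hp2⟩ := key x
    exact ⟨p.1, by rw [hL1eq p, hp2]⟩
  have hL1inj : Function.Injective L1 :=
    (LinearMap.injective_iff_surjective).mpr hL1surj
  have hA1inj : Function.Injective A1 := by
    rw [← LinearMap.ker_eq_bot, LinearMap.ker_eq_bot']
    intro y hy
    have hy2 : (L (0, y)).2 = 0 := hy
    have h1 : (L (0, y)).1 = 0 := by
      have h := hdep 0 y 0
      have h0 : ((0 : Fin m → ZMod 2), (0 : Fin m → ZMod 2)) = (0 : _ × _) := rfl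
      rw [h0, map_zero] at h
      simpa using h
    have hzero : L (0, y) = L 0 := by rw [map_zero]; exact Prod.ext h1 hy2
    have := L.injective hzero
    simpa [Prod.ext_iff] using this
  have hA1surj : Function.Surjective A1 :=
    (LinearMap.injective_iff_surjective).mp hA1inj
  let L1e := LinearEquiv.ofBijective L1 ⟨hL1inj, hL1surj⟩
  let A1e := LinearEquiv.ofBijective A1 ⟨hA1inj, hA1surj⟩
  let Am : (Fin m → ZMod 2) →ₗ[ZMod 2] (Fin m → ZMod 2) :=
    { toFun := fun x => (L (L1e.symm x, 0)).2
      map_add' := by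
        intro a b
        show (L (L1e.symm (a + b), 0)).2 = (L (L1e.symm a, 0)).2 + (L (L1e.symm b, 0)).2
        have h : ((L1e.symm a : Fin m → ZMod 2), (0 : Fin m → ZMod 2)) + (L1e.symm b, 0)
            = (L1e.symm (a + b), 0) := by simp
        rw [← h, map_add]; rfl
      map_smul' := by
        intro c a
        show (L (L1e.symm (c • a), 0)).2 = c • (L (L1e.symm a, 0)).2
        have h : c • ((L1e.symm a : Fin m → ZMod 2), (0 : Fin m → ZMod 2))
            = (L1e.symm (c • a), 0) := by simp
        rw [← h, map_smul]; rfl }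
  refine ⟨A1e, L1e.symm, Am, 0, 0, 0, ?_⟩
  intro x
  obtain ⟨p, hp1, hp2⟩ := key x
  have hx1 : L1e p.1 = x := by
    show L1 p.1 = x
    rw [hL1eq p, hp2]
  have hsymm : L1e.symm x = p.1 := by rw [← hx1, LinearEquiv.symm_apply_apply]
  have hPF : F' x = (L p).2 := by rw [hp2]
  have hAm : Am x = (L (p.1, 0)).2 := by
    show (L (L1e.symm x, 0)).2 = (L (p.1, 0)).2
    rw [hsymm]
  have hA1 : A1e (F (L1e.symm x + 0)) = (L (0, p.2)).2 := by
    show A1 (F (L1e.symm x + 0)) = (L (0, p.2)).2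
    rw [add_zero, hsymm, ← hp1]; rfl
  have hsum : L p = L (p.1, 0) + L (0, p.2) := by
    rw [← map_add]
    congr 1
    simp
  rw [hPF, hsum, hAm, hA1]
  show (L (p.1, 0)).2 + (L (0, p.2)).2
      = (L (0, p.2)).2 + 0 + (L (p.1, 0)).2 + 0
  ring
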